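/- Let G=(V,E) be a finite simple graph and let 1 ≤ k ≤ |V|/2. Then λ_1(L(F_k(G))) ≤ |E| + 4k − 2. -/

import Mathlib

open Finset
open scoped symmDiff

/-- The `k`-th token graph of `G`: its vertices are the `k`-element subsets of the
vertex set of `G`, two of them being adjacent whenever their symmetric difference
is an edge of `G`. -/
def tokenGraph {V : Type*} [DecidableEq V] (G : SimpleGraph V) (k : ℕ) :
    SimpleGraph {s : Finset V // s.card = k} where
  Adj σ τ := ∃ u v, G.Adj u v ∧ σ.val ∆ τ.val = {u, v}
  symm := by
    constructor
    rintro σ τ ⟨u, v, huv, hd⟩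
    exact ⟨u, v, huv, by rwa [symmDiff_comm]⟩
  loopless := by
    constructor
    rintro σ ⟨u, v, huv, hd⟩
    rw [symmDiff_self] at hd
    have hu : u ∈ ({u, v} : Finset V) := by simp
    rw [← hd] at hu
    simp at hu

instance {V : Type*} [Fintype V] [DecidableEq V] (G : SimpleGraph V) [DecidableRel G.Adj]
    (k : ℕ) : DecidableRel (tokenGraph G k).Adj := fun σ τ =>
  inferInstanceAs (Decidable (∃ u v, G.Adj u v ∧ σ.val ∆ τ.val = {u, v}))

/-- The largest eigenvalue of a (symmetric) real matrix, expressed as the supremum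
of the set of its real eigenvalues. -/
noncomputable def maxEigenvalue {n : Type*} [Fintype n] (M : Matrix n n ℝ) : ℝ :=
  sSup {μ : ℝ | ∃ x : n → ℝ, x ≠ 0 ∧ M.mulVec x = μ • x}

namespace TokenProof

set_option linter.unusedSectionVars false
set_option linter.unusedVariables false

variable {V : Type*} [Fintype V] [DecidableEq V] {k : ℕ}

abbrev KSet (V : Type*) [DecidableEq V] (k : ℕ) := {s : Finset V // s.card = k}

/-- the "qualifies" predicate: `σ` contains `u` but not `v`. -/
def Q (u v : V) (σ : KSet V k) : Prop := u ∈ σ.val ∧ v ∉ σ.val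

instance (u v : V) (σ : KSet V k) : Decidable (Q u v σ) := by unfold Q; infer_instance

/-- swap `u` out, `v` in. -/
def swp (u v : V) (σ : KSet V k) : KSet V k :=
  if h : Q u v σ then
    ⟨insert v (σ.val.erase u), by
      have h1 := h.1
      have h2 := h.2
      have hpos : 0 < σ.val.card := Finset.card_pos.mpr ⟨u, h1⟩
      rw [Finset.card_insert_of_notMem (fun hv => h2 (Finset.mem_of_mem_erase hv)),
        Finset.card_erase_of_mem h1, σ.2]
      have hk : 0 < k := by rw [← σ.2]; exact hpos
      omega⟩
  else σ

lemma swp_val {u v : V} {σ : KSet V k} (h : Q u v σ) :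
    (swp u v σ).val = insert v (σ.val.erase u) := by
  unfold swp; rw [dif_pos h]

lemma Q_ne {u v : V} {σ : KSet V k} (h : Q u v σ) : u ≠ v := by
  rintro rfl; exact h.2 h.1

lemma Q_swp {u v : V} {σ : KSet V k} (h : Q u v σ) : Q v u (swp u v σ) := by
  have hne := Q_ne h
  constructor
  · rw [swp_val h]; exact Finset.mem_insert_self _ _
  · rw [swp_val h]
    intro hu
    rcases Finset.mem_insert.mp hu with h' | h'
    · exact hne h'
    · exact (Finset.notMem_erase u _) h'

lemma swp_swp {u v : V} {σ : KSet V k} (h : Q u v σ) : swp v u (swp u v σ) = σ := by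
  have h2 := Q_swp h
  apply Subtype.ext
  rw [swp_val h2, swp_val h]
  have hv : v ∉ σ.val.erase u := fun hv => h.2 (Finset.mem_of_mem_erase hv)
  rw [Finset.erase_insert hv, Finset.insert_erase h.1]

variable (x : KSet V k → ℝ)

/-- the set of `σ` qualifying for the ordered pair `(u,v)`. -/
def qualF (u v : V) : Finset (KSet V k) := Finset.univ.filter (Q u v)

/-- edge form of the ordered pair `(u,v)`. -/
def ET (u v : V) : ℝ := ∑ σ ∈ qualF u v, (x σ - x (swp u v σ)) ^ 2

/-- form of a finite set of ordered pairs. -/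
def Form (ε : Finset (V × V)) : ℝ := ∑ p ∈ ε, ET x p.1 p.2

lemma swap_reindex (u v : V) (f : KSet V k → ℝ) :
    ∑ σ ∈ qualF u v, f (swp u v σ) = ∑ τ ∈ (qualF v u : Finset (KSet V k)), f τ := by
  apply Finset.sum_nbij' (i := fun σ => swp u v σ) (j := fun τ => swp v u τ)
  · intro a ha
    simp only [qualF, Finset.mem_filter, Finset.mem_univ, true_and] at ha ⊢
    exact Q_swp ha
  · intro a ha
    simp only [qualF, Finset.mem_filter, Finset.mem_univ, true_and] at ha ⊢
    exact Q_swp ha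
  · intro a ha
    simp only [qualF, Finset.mem_filter, Finset.mem_univ, true_and] at ha
    exact swp_swp ha
  · intro a ha
    simp only [qualF, Finset.mem_filter, Finset.mem_univ, true_and] at ha
    exact swp_swp ha
  · intro a _
    rfl

lemma ET_symm (u v : V) : ET x u v = ET x v u := by
  unfold ET
  rw [← swap_reindex u v (fun τ => (x τ - x (swp v u τ)) ^ 2)]
  apply Finset.sum_congr rfl
  intro σ hσ
  simp only [qualF, Finset.mem_filter, Finset.mem_univ, true_and] at hσ
  rw [swp_swp hσ]
  ring

/-- exchange a sum over pairs-then-qualifying-sets. -/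
lemma exch {α : Type*} (η : Finset α) (P : α → KSet V k → Prop) [∀ p σ, Decidable (P p σ)]
    (f : KSet V k → ℝ) :
    ∑ p ∈ η, ∑ σ ∈ Finset.univ.filter (P p), f σ
      = ∑ σ : KSet V k, ((η.filter (fun p => P p σ)).card : ℝ) * f σ := by
  simp_rw [Finset.sum_filter]
  rw [Finset.sum_comm]
  congr 1
  ext σ
  rw [← Finset.sum_filter, Finset.sum_const, nsmul_eq_mul]


-- symmetric difference computations
lemma symmDiff_swp {u v : V} {σ : KSet V k} (hq : Q u v σ) :
    σ.val ∆ (swp u v σ).val = {u, v} := by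
  have hne := Q_ne hq
  rw [swp_val hq]
  ext a
  simp only [Finset.mem_symmDiff, Finset.mem_insert, Finset.mem_erase, Finset.mem_singleton]
  by_cases hau : a = u
  · subst hau
    constructor
    · intro _; exact Or.inl rfl
    · intro _
      left
      exact ⟨hq.1, by rintro (h | ⟨h1, _⟩); exact hne h; exact h1 rfl⟩
  · by_cases hav : a = v
    · subst hav
      constructor
      · intro _; exact Or.inr rfl
      · intro _
        right
        exact ⟨Or.inl rfl, hq.2⟩
    · constructor
      · rintro (⟨h1, h2⟩ | ⟨h1, h2⟩)
        · exact absurd (Or.inr ⟨hau, h1⟩) h2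
        · rcases h1 with h | ⟨_, h⟩
          · exact absurd h hav
          · exact absurd h h2
      · rintro (h | h)
        · exact absurd h hau
        · exact absurd h hav

lemma sd_ext {s t : Finset V} {u v : V} (hne : u ≠ v) (hsd : s ∆ t = {u, v})
    (hu : u ∈ s) (hu' : u ∉ t) (hv : v ∈ t) (hv' : v ∉ s) : t = insert v (s.erase u) := by
  ext a
  by_cases hau : a = u
  · subst hau
    simp only [Finset.mem_insert, Finset.mem_erase]
    constructor
    · intro h; exact absurd h hu'
    · rintro (h | ⟨h1, _⟩)
      · exact absurd h hne
      · exact absurd rfl h1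
  · by_cases hav : a = v
    · subst hav
      simp [hv]
    · have hand : a ∉ s ∆ t := by
        rw [hsd]
        simp only [Finset.mem_insert, Finset.mem_singleton]
        rintro (h | h)
        · exact hau h
        · exact hav h
      rw [Finset.mem_symmDiff] at hand
      push_neg at hand
      simp only [Finset.mem_insert, Finset.mem_erase]
      constructor
      · intro hat
        exact Or.inr ⟨hau, hand.2 hat⟩
      · rintro (h | ⟨_, h⟩)
        · exact absurd h hav
        · by_contra hat
          exact hat (by_contra (fun _ => hat (absurd (hand.1 h) (fun q => hat q))))

lemma same_side_contra {s t : Finset V} {u v : V} (hsd : s ∆ t = {u, v})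
    (hcard : s.card = t.card) (hu : u ∈ s) (hu' : u ∉ t) (hv : v ∈ s) (hv' : v ∉ t) : False := by
  have hts : t ⊆ s := by
    intro a ha
    by_contra has
    have : a ∈ s ∆ t := Finset.mem_symmDiff.mpr (Or.inr ⟨ha, has⟩)
    rw [hsd] at this
    simp only [Finset.mem_insert, Finset.mem_singleton] at this
    rcases this with rfl | rfl
    · exact hu' ha
    · exact hv' ha
  have hlt : t.card < s.card :=
    Finset.card_lt_card ⟨hts, fun hst => hu' (hst hu)⟩
  omega

lemma orient {σ τ : KSet V k} {u v : V} (hne : u ≠ v) (hsd : σ.val ∆ τ.val = {u, v}) :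
    (u ∈ σ.val ∧ v ∉ σ.val ∧ τ.val = insert v (σ.val.erase u)) ∨
      (v ∈ σ.val ∧ u ∉ σ.val ∧ τ.val = insert u (σ.val.erase v)) := by
  have hcard : σ.val.card = τ.val.card := by rw [σ.2, τ.2]
  have humem : u ∈ σ.val ∆ τ.val := by rw [hsd]; simp
  have hvmem : v ∈ σ.val ∆ τ.val := by rw [hsd]; simp
  rw [Finset.mem_symmDiff] at humem hvmem
  rcases humem with ⟨hu1, hu2⟩ | ⟨hu1, hu2⟩
  · rcases hvmem with ⟨hv1, hv2⟩ | ⟨hv1, hv2⟩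
    · exact absurd (same_side_contra hsd hcard hu1 hu2 hv1 hv2) not_false
    · exact Or.inl ⟨hu1, hv2, sd_ext hne hsd hu1 hu2 hv1 hv2⟩
  · rcases hvmem with ⟨hv1, hv2⟩ | ⟨hv1, hv2⟩
    · have hsd' : σ.val ∆ τ.val = {v, u} := by rw [hsd, Finset.pair_comm]
      exact Or.inr ⟨hv1, hu2, sd_ext hne.symm hsd' hv1 hv2 hu1 hu2⟩
    · exact absurd (same_side_contra (s := τ.val) (t := σ.val)
        (by rwa [symmDiff_comm]) hcard.symm hu1 hu2 hv1 hv2) not_false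


-- matching lemmas
def NoDiag (ε : Finset (V × V)) : Prop := ∀ p ∈ ε, p.1 ≠ p.2

def WeakDisj (η : Finset (V × V)) : Prop :=
  ∀ p ∈ η, ∀ q ∈ η, p ≠ q →
    ({p.1, p.2} : Finset V) = {q.1, q.2} ∨ Disjoint ({p.1, p.2} : Finset V) {q.1, q.2}

lemma qual_card_le {η : Finset (V × V)} (hw : WeakDisj η) (hnd : NoDiag η) (σ : KSet V k) :
    (η.filter (fun p => Q p.1 p.2 σ)).card ≤ k := by
  have key : (η.filter (fun p => Q p.1 p.2 σ)).card ≤ σ.val.card := by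
    apply Finset.card_le_card_of_injOn (fun p => p.1)
    · intro p hp
      exact ((Finset.mem_filter.mp hp).2).1
    · intro p hp q hq hfst0
      have hfst : p.1 = q.1 := hfst0
      simp only [Finset.mem_coe, Finset.mem_filter] at hp hq
      by_contra hne
      rcases hw p hp.1 q hq.1 hne with heq | hdis
      · -- {p.1,p.2} = {q.1,q.2}, p.1 = q.1 ⇒ p.2 = q.2 ⇒ p = q
        have h2 : p.2 ∈ ({q.1, q.2} : Finset V) := by
          rw [← heq]; simp
        rcases Finset.mem_insert.mp h2 with h' | h'
        · exact hnd p hp.1 ((hfst.trans h'.symm) : p.1 = p.2)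
        · simp only [Finset.mem_singleton] at h'
          exact hne (Prod.ext hfst h')
      · exact (Finset.disjoint_left.mp hdis (by simp : p.1 ∈ ({p.1, p.2} : Finset V)))
          (by rw [hfst]; simp)

  exact le_of_le_of_eq key σ.2
lemma coqual_card_le {η : Finset (V × V)} (hw : WeakDisj η) (hnd : NoDiag η) (σ : KSet V k) :
    (η.filter (fun p => Q p.2 p.1 σ)).card ≤ k := by
  have key : (η.filter (fun p => Q p.2 p.1 σ)).card ≤ σ.val.card := by
    apply Finset.card_le_card_of_injOn (fun p => p.2)
    · intro p hp
      exact ((Finset.mem_filter.mp hp).2).1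
    · intro p hp q hq hsnd0
      have hsnd : p.2 = q.2 := hsnd0
      simp only [Finset.mem_coe, Finset.mem_filter] at hp hq
      by_contra hne
      rcases hw p hp.1 q hq.1 hne with heq | hdis
      · have h2 : p.1 ∈ ({q.1, q.2} : Finset V) := by
          rw [← heq]; simp
        rcases Finset.mem_insert.mp h2 with h' | h'
        · exact hne (Prod.ext h' hsnd)
        · simp only [Finset.mem_singleton] at h'
          exact hnd p hp.1 ((h'.trans hsnd.symm) : p.1 = p.2)
      · exact (Finset.disjoint_left.mp hdis (by simp : p.2 ∈ ({p.1, p.2} : Finset V)))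
          (by rw [hsnd]; simp)

  exact le_of_le_of_eq key σ.2
lemma match_bound {η : Finset (V × V)} (hw : WeakDisj η) (hnd : NoDiag η) :
    Form x η ≤ (4 * k) * ∑ σ : KSet V k, (x σ) ^ 2 := by
  have step1 : Form x η ≤
      ∑ p ∈ η, (∑ σ ∈ (qualF p.1 p.2 : Finset (KSet V k)), 2 * (x σ) ^ 2
        + ∑ σ ∈ (qualF p.1 p.2 : Finset (KSet V k)), 2 * (x (swp p.1 p.2 σ)) ^ 2) := by
    apply Finset.sum_le_sum
    intro p _
    rw [← Finset.sum_add_distrib]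
    apply Finset.sum_le_sum
    intro σ _
    nlinarith [sq_nonneg (x σ + x (swp p.1 p.2 σ))]
  have step2 : ∀ p : V × V,
      ∑ σ ∈ (qualF p.1 p.2 : Finset (KSet V k)), 2 * (x (swp p.1 p.2 σ)) ^ 2
        = ∑ τ ∈ (qualF p.2 p.1 : Finset (KSet V k)), 2 * (x τ) ^ 2 := by
    intro p
    exact swap_reindex p.1 p.2 (fun τ => 2 * (x τ) ^ 2)
  simp_rw [step2] at step1
  rw [Finset.sum_add_distrib] at step1
  unfold qualF at step1
  have e1 : ∑ p ∈ η, ∑ σ ∈ Finset.univ.filter (Q p.1 p.2), (fun σ => 2 * (x σ) ^ 2) σ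
      = ∑ σ : KSet V k, ((η.filter (fun p => Q p.1 p.2 σ)).card : ℝ) * (2 * (x σ) ^ 2) :=
    exch η (fun p σ => Q p.1 p.2 σ) (fun σ => 2 * (x σ) ^ 2)
  have e2 : ∑ p ∈ η, ∑ σ ∈ Finset.univ.filter (Q p.2 p.1), (fun σ => 2 * (x σ) ^ 2) σ
      = ∑ σ : KSet V k, ((η.filter (fun p => Q p.2 p.1 σ)).card : ℝ) * (2 * (x σ) ^ 2) :=
    exch η (fun p σ => Q p.2 p.1 σ) (fun σ => 2 * (x σ) ^ 2)
  simp only [] at e1 e2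
  rw [e1, e2, ← Finset.sum_add_distrib] at step1
  refine step1.trans ?_
  rw [Finset.mul_sum]
  apply Finset.sum_le_sum
  intro σ _
  have h1 := qual_card_le (k := k) hw hnd σ
  have h2 := coqual_card_le (k := k) hw hnd σ
  have hx2 : (0:ℝ) ≤ (x σ)^2 := sq_nonneg _
  have c1 : ((η.filter (fun p => Q p.1 p.2 σ)).card : ℝ) ≤ (k : ℝ) := by exact_mod_cast h1
  have c2 : ((η.filter (fun p => Q p.2 p.1 σ)).card : ℝ) ≤ (k : ℝ) := by exact_mod_cast h2
  nlinarith


section Star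
variable (L : Finset V) (c : V)

/-- number of elements of `L` in `τ`. -/
def jj (τ : KSet V k) : ℕ := (τ.val ∩ L).card

noncomputable def gy (σ : KSet V k) : ℝ :=
  1 + ((jj L σ : ℝ) + 1) / ((L.card : ℝ) - jj L σ)

noncomputable def gz (τ : KSet V k) : ℝ :=
  1 + ((L.card : ℝ) - (jj L τ) + 1) / (jj L τ)

lemma jj_le (τ : KSet V k) : jj L τ ≤ L.card :=
  Finset.card_le_card (Finset.inter_subset_right)

lemma jj_swp {w : V} (hw : w ∈ L) (hc : c ∉ L) {σ : KSet V k} (hq : Q c w σ) :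
    jj L (swp c w σ) = jj L σ + 1 := by
  unfold jj
  rw [swp_val hq]
  have hset : (insert w (σ.val.erase c)) ∩ L = insert w (σ.val ∩ L) := by
    ext z
    simp only [Finset.mem_inter, Finset.mem_insert, Finset.mem_erase]
    constructor
    · rintro ⟨hz | ⟨hzc, hzσ⟩, hzL⟩
      · exact Or.inl hz
      · exact Or.inr ⟨hzσ, hzL⟩
    · rintro (rfl | ⟨hzσ, hzL⟩)
      · exact ⟨Or.inl rfl, hw⟩
      · refine ⟨Or.inr ⟨?_, hzσ⟩, hzL⟩
        rintro rfl; exact hc hzL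
  rw [hset, Finset.card_insert_of_notMem (fun hmem => hq.2 (Finset.mem_inter.mp hmem).1)]

lemma jj_lt {w : V} (hw : w ∈ L) {σ : KSet V k} (hq : Q c w σ) : jj L σ < L.card := by
  have hsub : σ.val ∩ L ⊆ L.erase w := by
    intro z hz
    rcases Finset.mem_inter.mp hz with ⟨hz1, hz2⟩
    exact Finset.mem_erase.mpr ⟨fun h => hq.2 (h ▸ hz1), hz2⟩
  calc jj L σ ≤ (L.erase w).card := Finset.card_le_card hsub
    _ < L.card := Finset.card_erase_lt_of_mem hw

lemma per_edge {w : V} (hw : w ∈ L) (hc : c ∉ L) {σ : KSet V k} (hq : Q c w σ) :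
    (x σ - x (swp c w σ)) ^ 2
      ≤ gy L σ * (x σ) ^ 2 + gz L (swp c w σ) * (x (swp c w σ)) ^ 2 := by
  set p := x σ
  set q := x (swp c w σ)
  have hjlt := jj_lt L c hw hq
  set A : ℝ := (L.card : ℝ) - jj L σ with hA
  set B : ℝ := (jj L σ : ℝ) + 1 with hB
  have hApos : 0 < A := by
    rw [hA]
    have : (jj L σ : ℝ) < (L.card : ℝ) := by exact_mod_cast hjlt
    linarith
  have hBpos : 0 < B := by rw [hB]; positivity
  have hgy : gy L σ = 1 + B / A := rfl
  have hgz : gz L (swp c w σ) = 1 + A / B := by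
    unfold gz
    rw [jj_swp L c hw hc hq]
    have : ((L.card : ℝ) - (jj L σ + 1 : ℕ) + 1) = A := by
      push_cast; rw [hA]; ring
    rw [this]
    have : ((jj L σ + 1 : ℕ) : ℝ) = B := by push_cast; rw [hB]
    rw [this]
  rw [hgy, hgz]
  have hid : (1 + B / A) * p ^ 2 + (1 + A / B) * q ^ 2 - (p - q) ^ 2
      = (B * p + A * q) ^ 2 / (A * B) := by
    field_simp
    ring
  nlinarith [sq_nonneg (B * p + A * q), mul_pos hApos hBpos,
    div_nonneg (sq_nonneg (B * p + A * q)) (le_of_lt (mul_pos hApos hBpos))]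

lemma count_y (σ : KSet V k) :
    ((L.filter (fun w => Q c w σ)).card : ℝ) * gy L σ ≤ (L.card : ℝ) + 1 := by
  by_cases hc : c ∈ σ.val
  · have hfil : L.filter (fun w => Q c w σ) = L.filter (fun w => w ∉ σ.val) := by
      apply Finset.filter_congr
      intro w _
      simp [Q, hc]
    rw [hfil]
    have hcard : (L.filter (fun w => w ∉ σ.val)).card = L.card - jj L σ := by
      have := Finset.card_filter_add_card_filter_not
        (s := L) (p := fun w => w ∈ σ.val)
      have hjj : (L.filter (fun w => w ∈ σ.val)).card = jj L σ := by
        unfold jj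
        rw [Finset.filter_mem_eq_inter, Finset.inter_comm]
      omega
    rw [hcard]
    by_cases hlt : jj L σ < L.card
    · have hne : (L.card : ℝ) - jj L σ ≠ 0 := by
        have : (jj L σ : ℝ) < (L.card : ℝ) := by exact_mod_cast hlt
        intro h; linarith
      have hcast : ((L.card - jj L σ : ℕ) : ℝ) = (L.card : ℝ) - jj L σ :=
        Nat.cast_sub (le_of_lt hlt)
      rw [hcast]
      unfold gy
      have hkey : ((L.card : ℝ) - jj L σ) * (1 + ((jj L σ : ℝ) + 1) / ((L.card : ℝ) - jj L σ))
          = (L.card : ℝ) + 1 := by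
        field_simp
        ring
      rw [hkey]
    · have heq : jj L σ = L.card := le_antisymm (jj_le L σ) (not_lt.mp hlt)
      rw [heq, Nat.sub_self]
      simp only [Nat.cast_zero, zero_mul]
      positivity
  · have hfil : L.filter (fun w => Q c w σ) = ∅ := by
      apply Finset.filter_false_of_mem
      intro w _
      simp [Q, hc]
    rw [hfil]
    simp only [Finset.card_empty, Nat.cast_zero, zero_mul]
    positivity

lemma count_z (τ : KSet V k) :
    ((L.filter (fun w => Q w c τ)).card : ℝ) * gz L τ ≤ (L.card : ℝ) + 1 := by
  by_cases hc : c ∈ τ.val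
  · have hfil : L.filter (fun w => Q w c τ) = ∅ := by
      apply Finset.filter_false_of_mem
      intro w _
      simp [Q, hc]
    rw [hfil]
    simp only [Finset.card_empty, Nat.cast_zero, zero_mul]
    positivity
  · have hfil : L.filter (fun w => Q w c τ) = L.filter (fun w => w ∈ τ.val) := by
      apply Finset.filter_congr
      intro w _
      simp [Q, hc]
    have hjj : (L.filter (fun w => w ∈ τ.val)).card = jj L τ := by
      unfold jj
      rw [Finset.filter_mem_eq_inter, Finset.inter_comm]
    rw [hfil, hjj]
    by_cases h0 : jj L τ = 0
    · rw [h0]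
      simp only [Nat.cast_zero, zero_mul]
      positivity
    · have hne : (jj L τ : ℝ) ≠ 0 := Nat.cast_ne_zero.mpr h0
      unfold gz
      have hkey : (jj L τ : ℝ) * (1 + ((L.card : ℝ) - (jj L τ) + 1) / (jj L τ))
          = (L.card : ℝ) + 1 := by
        field_simp
        ring
      rw [hkey]

lemma per_sigma (hc : c ∉ L) (σ : KSet V k) :
    ((L.filter (fun w => Q c w σ)).card : ℝ) * gy L σ
      + ((L.filter (fun w => Q w c σ)).card : ℝ) * gz L σ ≤ (L.card : ℝ) + 1 := by
  by_cases hcσ : c ∈ σ.val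
  · have hz : L.filter (fun w => Q w c σ) = ∅ :=
      Finset.filter_false_of_mem (fun w _ => by simp [Q, hcσ])
    rw [hz]
    simp only [Finset.card_empty, Nat.cast_zero, zero_mul, add_zero]
    exact count_y L c σ
  · have hy : L.filter (fun w => Q c w σ) = ∅ :=
      Finset.filter_false_of_mem (fun w _ => by simp [Q, hcσ])
    rw [hy]
    simp only [Finset.card_empty, Nat.cast_zero, zero_mul, zero_add]
    exact count_z L c σ

lemma star_core (hc : c ∉ L) :
    ∑ w ∈ L, ET x c w ≤ ((L.card : ℝ) + 1) * ∑ σ : KSet V k, (x σ) ^ 2 := by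
  have step1 : ∑ w ∈ L, ET x c w ≤
      ∑ w ∈ L, (∑ σ ∈ (qualF c w : Finset (KSet V k)), gy L σ * (x σ) ^ 2
        + ∑ σ ∈ (qualF c w : Finset (KSet V k)), gz L (swp c w σ) * (x (swp c w σ)) ^ 2) := by
    apply Finset.sum_le_sum
    intro w hw
    unfold ET
    rw [← Finset.sum_add_distrib]
    apply Finset.sum_le_sum
    intro σ hσ
    have hq : Q c w σ := by
      simpa [qualF] using hσ
    exact per_edge x L c hw hc hq
  have e2 : ∀ w ∈ L, ∑ σ ∈ (qualF c w : Finset (KSet V k)),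
        gz L (swp c w σ) * (x (swp c w σ)) ^ 2
      = ∑ τ ∈ (qualF w c : Finset (KSet V k)), gz L τ * (x τ) ^ 2 := by
    intro w _
    exact swap_reindex c w (fun τ => gz L τ * (x τ) ^ 2)
  have step1' : ∑ w ∈ L, ET x c w ≤
      ∑ w ∈ L, (∑ σ ∈ (qualF c w : Finset (KSet V k)), gy L σ * (x σ) ^ 2
        + ∑ τ ∈ (qualF w c : Finset (KSet V k)), gz L τ * (x τ) ^ 2) := by
    refine step1.trans (le_of_eq ?_)
    exact Finset.sum_congr rfl (fun w hw => by rw [e2 w hw])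
  clear step1
  rename' step1' => step1
  rw [Finset.sum_add_distrib] at step1
  unfold qualF at step1
  have e3 : ∑ w ∈ L, ∑ σ ∈ Finset.univ.filter (Q c w), (fun σ => gy L σ * (x σ) ^ 2) σ
      = ∑ σ : KSet V k, ((L.filter (fun w => Q c w σ)).card : ℝ) * (gy L σ * (x σ) ^ 2) :=
    exch L (fun w σ => Q c w σ) (fun σ => gy L σ * (x σ) ^ 2)
  have e4 : ∑ w ∈ L, ∑ σ ∈ Finset.univ.filter (fun τ => Q w c τ), (fun τ => gz L τ * (x τ) ^ 2) σ
      = ∑ σ : KSet V k, ((L.filter (fun w => Q w c σ)).card : ℝ) * (gz L σ * (x σ) ^ 2) :=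
    exch L (fun w τ => Q w c τ) (fun τ => gz L τ * (x τ) ^ 2)
  simp only [] at e3 e4
  rw [e3, e4, ← Finset.sum_add_distrib] at step1
  refine step1.trans ?_
  rw [Finset.mul_sum]
  apply Finset.sum_le_sum
  intro σ _
  have hps := per_sigma L c hc σ
  have hx2 : (0:ℝ) ≤ (x σ) ^ 2 := sq_nonneg _
  nlinarith [hps, hx2]

end Star

def Sym (ε : Finset (V × V)) : Prop := ∀ p ∈ ε, Prod.swap p ∈ ε

def StrictM (M : Finset (V × V)) : Prop :=
  ∀ p ∈ M, ∀ q ∈ M, p ≠ q → Disjoint ({p.1, p.2} : Finset V) {q.1, q.2}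

lemma star_out {ε₁ : Finset (V × V)} {c : V} (h1 : ∀ p ∈ ε₁, p.1 = c) (hnd : NoDiag ε₁) :
    Form x ε₁ ≤ ((ε₁.card : ℝ) + 1) * ∑ σ : KSet V k, (x σ) ^ 2 := by
  classical
  set L := ε₁.image Prod.snd with hL
  have hcL : c ∉ L := by
    intro hc
    rcases Finset.mem_image.mp hc with ⟨p, hp, hpc⟩
    exact hnd p hp ((h1 p hp).trans hpc.symm)
  have hinj : ∀ p ∈ ε₁, ∀ q ∈ ε₁, p.2 = q.2 → p = q := by
    intro p hp q hq h2
    exact Prod.ext ((h1 p hp).trans (h1 q hq).symm) h2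
  have hcard : L.card = ε₁.card := Finset.card_image_of_injOn (fun p hp q hq h => hinj p hp q hq h)
  have hform : Form x ε₁ = ∑ w ∈ L, ET x c w := by
    rw [hL, Finset.sum_image hinj]
    apply Finset.sum_congr rfl
    intro p hp
    rw [h1 p hp]
  rw [hform, ← hcard]
  exact star_core x L c hcL

lemma star_in {ε₂ : Finset (V × V)} {c : V} (h2 : ∀ p ∈ ε₂, p.2 = c) (hnd : NoDiag ε₂) :
    Form x ε₂ ≤ ((ε₂.card : ℝ) + 1) * ∑ σ : KSet V k, (x σ) ^ 2 := by
  classical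
  set L := ε₂.image Prod.fst with hL
  have hcL : c ∉ L := by
    intro hc
    rcases Finset.mem_image.mp hc with ⟨p, hp, hpc⟩
    exact hnd p hp (hpc.trans (h2 p hp).symm)
  have hinj : ∀ p ∈ ε₂, ∀ q ∈ ε₂, p.1 = q.1 → p = q := by
    intro p hp q hq hfst
    exact Prod.ext hfst ((h2 p hp).trans (h2 q hq).symm)
  have hcard : L.card = ε₂.card := Finset.card_image_of_injOn (fun p hp q hq h => hinj p hp q hq h)
  have hform : Form x ε₂ = ∑ w ∈ L, ET x c w := by
    rw [hL, Finset.sum_image hinj]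
    apply Finset.sum_congr rfl
    intro p hp
    rw [h2 p hp, ET_symm]
  rw [hform, ← hcard]
  exact star_core x L c hcL

lemma form_split {ε S : Finset (V × V)} (h : S ⊆ ε) :
    Form x ε = Form x (ε \ S) + Form x S := (Finset.sum_sdiff h).symm

lemma four_star {S : Finset (V × V)} {u v : V} (hnd : NoDiag S)
    (hS : ∀ p ∈ S, p.1 = u ∨ p.2 = u ∨ p.1 = v ∨ p.2 = v) :
    Form x S ≤ ((S.card : ℝ) + 4) * ∑ σ : KSet V k, (x σ) ^ 2 := by
  classical
  set S1 := S.filter (fun p => p.1 = u) with hS1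
  set R1 := S \ S1 with hR1
  set S2 := R1.filter (fun p => p.2 = u) with hS2
  set R2 := R1 \ S2 with hR2
  set S3 := R2.filter (fun p => p.1 = v) with hS3
  set S4 := R2 \ S3 with hS4
  have hsub1 : S1 ⊆ S := Finset.filter_subset _ _
  have hsub2 : S2 ⊆ R1 := Finset.filter_subset _ _
  have hsub3 : S3 ⊆ R2 := Finset.filter_subset _ _
  have hR1S : R1 ⊆ S := Finset.sdiff_subset
  have hR2S : R2 ⊆ S := fun p hp => hR1S (Finset.sdiff_subset hp)
  have hS4S : S4 ⊆ S := fun p hp => hR2S (Finset.sdiff_subset hp)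
  have e1 : Form x S = Form x R1 + Form x S1 := form_split x hsub1
  have e2 : Form x R1 = Form x R2 + Form x S2 := form_split x hsub2
  have e3 : Form x R2 = Form x S4 + Form x S3 := form_split x hsub3
  have b1 : Form x S1 ≤ ((S1.card : ℝ) + 1) * ∑ σ : KSet V k, (x σ) ^ 2 :=
    star_out x (fun p hp => (Finset.mem_filter.mp hp).2) (fun p hp => hnd p (hsub1 hp))
  have b2 : Form x S2 ≤ ((S2.card : ℝ) + 1) * ∑ σ : KSet V k, (x σ) ^ 2 :=
    star_in x (fun p hp => (Finset.mem_filter.mp hp).2)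
      (fun p hp => hnd p (hR1S (hsub2 hp)))
  have b3 : Form x S3 ≤ ((S3.card : ℝ) + 1) * ∑ σ : KSet V k, (x σ) ^ 2 :=
    star_out x (fun p hp => (Finset.mem_filter.mp hp).2)
      (fun p hp => hnd p (hR2S (hsub3 hp)))
  have hS4v : ∀ p ∈ S4, p.2 = v := by
    intro p hp
    have hp3 : p ∈ R2 ∧ ¬ p.1 = v := by
      have := Finset.mem_sdiff.mp hp
      exact ⟨this.1, fun h => this.2 (Finset.mem_filter.mpr ⟨this.1, h⟩)⟩
    have hp2 : p ∈ R1 ∧ ¬ p.2 = u := by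
      have := Finset.mem_sdiff.mp hp3.1
      exact ⟨this.1, fun h => this.2 (Finset.mem_filter.mpr ⟨this.1, h⟩)⟩
    have hp1 : p ∈ S ∧ ¬ p.1 = u := by
      have := Finset.mem_sdiff.mp hp2.1
      exact ⟨this.1, fun h => this.2 (Finset.mem_filter.mpr ⟨this.1, h⟩)⟩
    rcases hS p hp1.1 with h | h | h | h
    · exact absurd h hp1.2
    · exact absurd h hp2.2
    · exact absurd h hp3.2
    · exact h
  have b4 : Form x S4 ≤ ((S4.card : ℝ) + 1) * ∑ σ : KSet V k, (x σ) ^ 2 :=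
    star_in x hS4v (fun p hp => hnd p (hS4S hp))
  have c1 : R1.card + S1.card = S.card := Finset.card_sdiff_add_card_eq_card hsub1
  have c2 : R2.card + S2.card = R1.card := Finset.card_sdiff_add_card_eq_card hsub2
  have c3 : S4.card + S3.card = R2.card := Finset.card_sdiff_add_card_eq_card hsub3
  have hsum : (S1.card : ℝ) + S2.card + S3.card + S4.card = S.card := by
    push_cast [← c1, ← c2, ← c3]
    ring
  have hSx : (0:ℝ) ≤ ∑ σ : KSet V k, (x σ) ^ 2 := by positivity
  calc Form x S = Form x S4 + Form x S3 + Form x S2 + Form x S1 := by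
        rw [e1, e2, e3]
    _ ≤ (((S4.card : ℝ) + 1) + ((S3.card : ℝ) + 1) + ((S2.card : ℝ) + 1) + ((S1.card : ℝ) + 1))
          * ∑ σ : KSet V k, (x σ) ^ 2 := by
        rw [add_mul, add_mul, add_mul]
        gcongr <;> assumption
    _ = ((S.card : ℝ) + 4) * ∑ σ : KSet V k, (x σ) ^ 2 := by
        rw [← hsum]; ring_nf

lemma aux_matchfree (j : ℕ) :
    ∀ (ε : Finset (V × V)), Sym ε → NoDiag ε →
      (∀ M ⊆ ε, StrictM M → M.card ≤ j) →
      Form x ε ≤ ((ε.card : ℝ) + 4 * j) * ∑ σ : KSet V k, (x σ) ^ 2 := by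
  induction j with
  | zero =>
    intro ε hsym hnd hm
    rcases ε.eq_empty_or_nonempty with rfl | ⟨p, hp⟩
    · simp [Form]
    · exfalso
      have := hm {p} (Finset.singleton_subset_iff.mpr hp)
        (by intro a ha b hb hab; simp at ha hb; exact absurd (ha.trans hb.symm) hab)
      simp at this
  | succ j ih =>
    intro ε hsym hnd hm
    rcases ε.eq_empty_or_nonempty with rfl | ⟨p₀, hp₀⟩
    · have hx : (0:ℝ) ≤ ∑ σ : KSet V k, (x σ) ^ 2 := by positivity
      simp only [Form, Finset.sum_empty, Finset.card_empty, Nat.cast_zero, zero_add]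
      positivity
    · set u := p₀.1 with hu
      set v := p₀.2 with hv
      set S := ε.filter (fun p => p.1 = u ∨ p.2 = u ∨ p.1 = v ∨ p.2 = v) with hSdef
      have hsub : S ⊆ ε := Finset.filter_subset _ _
      have hp₀S : p₀ ∈ S := Finset.mem_filter.mpr ⟨hp₀, Or.inl rfl⟩
      have hfs : Form x S ≤ ((S.card : ℝ) + 4) * ∑ σ : KSet V k, (x σ) ^ 2 :=
        four_star x (fun p hp => hnd p (hsub hp))
          (fun p hp => (Finset.mem_filter.mp hp).2)
      have hsym' : Sym (ε \ S) := by
        intro p hp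
        rcases Finset.mem_sdiff.mp hp with ⟨hpε, hpS⟩
        refine Finset.mem_sdiff.mpr ⟨hsym p hpε, ?_⟩
        intro hswS
        rcases Finset.mem_filter.mp hswS with ⟨_, hcond⟩
        apply hpS
        refine Finset.mem_filter.mpr ⟨hpε, ?_⟩
        simp only [Prod.fst_swap, Prod.snd_swap] at hcond
        tauto
      have hnd' : NoDiag (ε \ S) := fun p hp => hnd p (Finset.mem_sdiff.mp hp).1
      have hm' : ∀ M ⊆ ε \ S, StrictM M → M.card ≤ j := by
        intro M hM hMs
        have hp₀M : p₀ ∉ M := fun h => (Finset.mem_sdiff.mp (hM h)).2 hp₀S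
        have hins : insert p₀ M ⊆ ε := by
          intro q hq
          rcases Finset.mem_insert.mp hq with rfl | hq'
          · exact hp₀
          · exact (Finset.mem_sdiff.mp (hM hq')).1
        have hq_not : ∀ q ∈ M, q.1 ≠ u ∧ q.2 ≠ u ∧ q.1 ≠ v ∧ q.2 ≠ v := by
          intro q hq
          have hqS := (Finset.mem_sdiff.mp (hM hq)).2
          have hqε := (Finset.mem_sdiff.mp (hM hq)).1
          by_contra hcon
          push_neg at hcon
          apply hqS
          refine Finset.mem_filter.mpr ⟨hqε, ?_⟩
          by_cases h1 : q.1 = u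
          · exact Or.inl h1
          by_cases h2 : q.2 = u
          · exact Or.inr (Or.inl h2)
          by_cases h3 : q.1 = v
          · exact Or.inr (Or.inr (Or.inl h3))
          · exact Or.inr (Or.inr (Or.inr (hcon h1 h2 h3)))
        have hdisj : ∀ q ∈ M, Disjoint ({p₀.1, p₀.2} : Finset V) {q.1, q.2} := by
          intro q hq
          obtain ⟨n1, n2, n3, n4⟩ := hq_not q hq
          rw [Finset.disjoint_left]
          intro a ha haq
          simp only [Finset.mem_insert, Finset.mem_singleton] at ha haq
          rcases ha with rfl | rfl
          · rcases haq with h | h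
            · exact n1 h.symm
            · exact n2 h.symm
          · rcases haq with h | h
            · exact n3 h.symm
            · exact n4 h.symm
        have hstrict : StrictM (insert p₀ M) := by
          intro a ha b hb hab
          rcases Finset.mem_insert.mp ha with rfl | ha' <;>
            rcases Finset.mem_insert.mp hb with rfl | hb'
          · exact absurd rfl hab
          · exact hdisj b hb'
          · exact (hdisj a ha').symm
          · exact hMs a ha' b hb' hab
        have := hm (insert p₀ M) hins hstrict
        rw [Finset.card_insert_of_notMem hp₀M] at this
        omega
      have hih := ih (ε \ S) hsym' hnd' hm'
      have hsplit := form_split x hsub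
      have hcards : ((ε \ S).card : ℝ) + S.card = ε.card := by
        have := Finset.card_sdiff_add_card_eq_card hsub
        push_cast [← this]
        ring
      calc Form x ε = Form x (ε \ S) + Form x S := hsplit
        _ ≤ (((ε \ S).card : ℝ) + 4 * j) * ∑ σ : KSet V k, (x σ) ^ 2
            + ((S.card : ℝ) + 4) * ∑ σ : KSet V k, (x σ) ^ 2 := by gcongr
        _ = ((((ε \ S).card : ℝ) + S.card) + 4 * j + 4) * ∑ σ : KSet V k, (x σ) ^ 2 := by ring
        _ = ((ε.card : ℝ) + 4 * (j + 1 : ℕ)) * ∑ σ : KSet V k, (x σ) ^ 2 := by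
            rw [hcards]; push_cast; ring

lemma main_bound (hk : 1 ≤ k) :
    ∀ (n : ℕ) (ε : Finset (V × V)), ε.card = n → Sym ε → NoDiag ε →
      Form x ε ≤ ((ε.card : ℝ) + (8 * k - 4)) * ∑ σ : KSet V k, (x σ) ^ 2 := by
  intro n
  induction n using Nat.strong_induction_on with
  | _ n ih =>
    intro ε hcard hsym hnd
    by_cases hex : ∃ M ⊆ ε, StrictM M ∧ M.card = 2 * k
    · obtain ⟨M, hMε, hMs, hMc⟩ := hex
      set η := M ∪ M.image Prod.swap with hη
      have hMnd : ∀ p ∈ M, p.1 ≠ p.2 := fun p hp => hnd p (hMε hp)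
      have hηε : η ⊆ ε := by
        apply Finset.union_subset hMε
        intro p hp
        rcases Finset.mem_image.mp hp with ⟨q, hq, rfl⟩
        exact hsym q (hMε hq)
      have hdisjM : Disjoint M (M.image Prod.swap) := by
        rw [Finset.disjoint_left]
        intro p hp hpi
        rcases Finset.mem_image.mp hpi with ⟨q, hq, hqp⟩
        by_cases hpq : p = q
        · subst hpq
          have : p.1 = p.2 := by
            have := congrArg Prod.fst hqp
            simpa using this.symm
          exact hMnd p hp this
        · have hd := hMs p hp q hq hpq
          have : p.1 ∈ ({q.1, q.2} : Finset V) := by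
            have h21 : q.2 = p.1 := by
              have := congrArg Prod.fst hqp
              simpa using this
            rw [← h21]; simp
          exact (Finset.disjoint_left.mp hd (by simp)) this
      have hηcard : η.card = 4 * k := by
        rw [hη, Finset.card_union_of_disjoint hdisjM,
          Finset.card_image_of_injective M Prod.swap_injective, hMc]
        omega
      have hηsym : ∀ p ∈ η, Prod.swap p ∈ η := by
        intro p hp
        rcases Finset.mem_union.mp hp with h | h
        · exact Finset.mem_union_right _ (Finset.mem_image_of_mem _ h)
        · rcases Finset.mem_image.mp h with ⟨q, hq, rfl⟩
          rw [Prod.swap_swap]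
          exact Finset.mem_union_left _ hq
      have hbase : ∀ p ∈ η, ∃ p₀ ∈ M, ({p.1, p.2} : Finset V) = {p₀.1, p₀.2} := by
        intro p hp
        rcases Finset.mem_union.mp hp with h | h
        · exact ⟨p, h, rfl⟩
        · rcases Finset.mem_image.mp h with ⟨q, hq, rfl⟩
          exact ⟨q, hq, by simp [Finset.pair_comm]⟩
      have hweak : WeakDisj η := by
        intro p hp q hq hpq
        obtain ⟨p₀, hp₀, hpe⟩ := hbase p hp
        obtain ⟨q₀, hq₀, hqe⟩ := hbase q hq
        by_cases h00 : p₀ = q₀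
        · left; rw [hpe, hqe, h00]
        · right; rw [hpe, hqe]; exact hMs p₀ hp₀ q₀ hq₀ h00
      have hηnd : NoDiag η := fun p hp => hnd p (hηε hp)
      have hmb := match_bound x hweak hηnd
      have h4kn : 4 * k ≤ n := by
        rw [← hcard, ← hηcard]
        exact Finset.card_le_card hηε
      have hsdc : (ε \ η).card = n - 4 * k := by
        rw [Finset.card_sdiff_of_subset hηε, hcard, hηcard]
      have hlt : n - 4 * k < n := by omega
      have hsym' : Sym (ε \ η) := by
        intro p hp
        rcases Finset.mem_sdiff.mp hp with ⟨hpε, hpη⟩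
        refine Finset.mem_sdiff.mpr ⟨hsym p hpε, fun hc => hpη ?_⟩
        have := hηsym _ hc
        rwa [Prod.swap_swap] at this
      have hnd' : NoDiag (ε \ η) := fun p hp => hnd p (Finset.mem_sdiff.mp hp).1
      have hih := ih (n - 4 * k) hlt (ε \ η) hsdc hsym' hnd'
      have hsplit := form_split x hηε
      have hcast : ((n - 4 * k : ℕ) : ℝ) = (n : ℝ) - 4 * k := by
        push_cast [Nat.cast_sub h4kn]
        ring
      have hSx : (0:ℝ) ≤ ∑ σ : KSet V k, (x σ) ^ 2 := by positivity
      calc Form x ε = Form x (ε \ η) + Form x η := hsplit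
        _ ≤ (((ε \ η).card : ℝ) + (8 * k - 4)) * ∑ σ : KSet V k, (x σ) ^ 2
            + (4 * k) * ∑ σ : KSet V k, (x σ) ^ 2 := by gcongr
        _ = ((((ε \ η).card : ℝ) + 4 * k) + (8 * k - 4)) * ∑ σ : KSet V k, (x σ) ^ 2 := by ring
        _ = ((ε.card : ℝ) + (8 * k - 4)) * ∑ σ : KSet V k, (x σ) ^ 2 := by
            rw [hsdc, hcast, hcard]; ring_nf
    · have hm : ∀ M ⊆ ε, StrictM M → M.card ≤ 2 * k - 1 := by
        intro M hM hMs
        by_contra hcon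
        push_neg at hcon
        have h2k : 2 * k ≤ M.card := by omega
        obtain ⟨M', hM'M, hM'c⟩ := Finset.exists_subset_card_eq h2k
        exact hex ⟨M', hM'M.trans hM, fun p hp q hq hpq => hMs p (hM'M hp) q (hM'M hq) hpq, hM'c⟩
      have := aux_matchfree x (2 * k - 1) ε hsym hnd hm
      have hc2 : ((2 * k - 1 : ℕ) : ℝ) = 2 * (k : ℝ) - 1 := by
        have : (1:ℕ) ≤ 2 * k := by omega
        push_cast [Nat.cast_sub this]
        ring
      calc Form x ε ≤ ((ε.card : ℝ) + 4 * ((2 * k - 1 : ℕ) : ℝ)) * ∑ σ : KSet V k, (x σ) ^ 2 :=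
            this
        _ = ((ε.card : ℝ) + (8 * k - 4)) * ∑ σ : KSet V k, (x σ) ^ 2 := by
            rw [hc2]; ring_nf


section Reindex
variable (G : SimpleGraph V) [DecidableRel G.Adj]

lemma per_sigma_reindex (σ : KSet V k) :
    ∑ p ∈ (Finset.univ : Finset (V × V)).filter
        (fun p => G.Adj p.1 p.2 ∧ Q p.1 p.2 σ), (x σ - x (swp p.1 p.2 σ)) ^ 2
      = ∑ τ ∈ (Finset.univ : Finset (KSet V k)).filter
          (fun τ => (tokenGraph G k).Adj σ τ), (x σ - x τ) ^ 2 := by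
  apply Finset.sum_bij (i := fun p _ => swp p.1 p.2 σ)
  · intro p hp
    rcases Finset.mem_filter.mp hp with ⟨-, hadj, hq⟩
    refine Finset.mem_filter.mpr ⟨Finset.mem_univ _, ?_⟩
    exact ⟨p.1, p.2, hadj, symmDiff_swp hq⟩
  · intro p hp p' hp' heq
    rcases Finset.mem_filter.mp hp with ⟨-, hadj, hq⟩
    rcases Finset.mem_filter.mp hp' with ⟨-, hadj', hq'⟩
    have hval : (swp p.1 p.2 σ).val = (swp p'.1 p'.2 σ).val := by rw [heq]
    rw [swp_val hq, swp_val hq'] at hval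
    have h1 : p'.1 = p.1 := by
      have hmem : p'.1 ∉ insert p.2 (σ.val.erase p.1) := by
        rw [hval]
        have hthis := (Q_swp hq').2
        rwa [swp_val hq'] at hthis
      by_contra hne
      apply hmem
      apply Finset.mem_insert_of_mem
      exact Finset.mem_erase.mpr ⟨hne, hq'.1⟩
    have h2 : p'.2 = p.2 := by
      have hmem : p'.2 ∈ insert p.2 (σ.val.erase p.1) := by
        rw [hval]
        exact Finset.mem_insert_self _ _
      rcases Finset.mem_insert.mp hmem with h | h
      · exact h
      · exact absurd (Finset.mem_of_mem_erase h) hq'.2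
    exact Prod.ext h1.symm h2.symm
  · intro τ hτ
    rcases Finset.mem_filter.mp hτ with ⟨-, u, v, hadj, hsd⟩
    rcases orient hadj.ne hsd with ⟨h1, h2, h3⟩ | ⟨h1, h2, h3⟩
    · have hq : Q u v σ := ⟨h1, h2⟩
      refine ⟨(u, v), Finset.mem_filter.mpr ⟨Finset.mem_univ _, hadj, hq⟩, ?_⟩
      apply Subtype.ext
      rw [swp_val hq, h3]
    · have hq : Q v u σ := ⟨h1, h2⟩
      refine ⟨(v, u), Finset.mem_filter.mpr ⟨Finset.mem_univ _, hadj.symm, hq⟩, ?_⟩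
      apply Subtype.ext
      rw [swp_val hq, h3]
  · intro p hp
    rfl

lemma total_form :
    ∑ σ : KSet V k, ∑ τ : KSet V k, (if (tokenGraph G k).Adj σ τ then (x σ - x τ) ^ 2 else 0)
      = Form x ((Finset.univ : Finset (V × V)).filter (fun p => G.Adj p.1 p.2)) := by
  unfold Form ET qualF
  rw [Finset.sum_filter]
  have step : ∀ p : V × V,
      (if G.Adj p.1 p.2 then
          ∑ σ ∈ Finset.univ.filter (Q p.1 p.2), (x σ - x (swp p.1 p.2 σ)) ^ 2
        else 0)
      = ∑ σ : KSet V k,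
          (if G.Adj p.1 p.2 ∧ Q p.1 p.2 σ then (x σ - x (swp p.1 p.2 σ)) ^ 2 else 0) := by
    intro p
    by_cases h : G.Adj p.1 p.2
    · rw [if_pos h, Finset.sum_filter]
      apply Finset.sum_congr rfl
      intro σ _
      by_cases hq : Q p.1 p.2 σ
      · rw [if_pos hq, if_pos ⟨h, hq⟩]
      · rw [if_neg hq, if_neg (fun hh => hq hh.2)]
    · rw [if_neg h]
      symm
      apply Finset.sum_eq_zero
      intro σ _
      rw [if_neg (fun hh => h hh.1)]
  rw [Finset.sum_congr rfl (fun p _ => step p)]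
  conv_rhs => rw [Finset.sum_comm]
  apply Finset.sum_congr rfl
  intro σ _
  rw [← Finset.sum_filter, ← per_sigma_reindex x G σ, Finset.sum_filter]

end Reindex

end TokenProof

theorem stmt_4 {V : Type*} [Fintype V] [DecidableEq V] (G : SimpleGraph V)
    [DecidableRel G.Adj] (k : ℕ) (hk1 : 1 ≤ k) (hk2 : 2 * k ≤ Fintype.card V) :
    maxEigenvalue ((tokenGraph G k).lapMatrix ℝ) ≤
      (G.edgeFinset.card : ℝ) + 4 * (k : ℝ) - 2 := by
  classical
  have hk1' : (1:ℝ) ≤ (k:ℝ) := by exact_mod_cast hk1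
  have hb : (0:ℝ) ≤ (G.edgeFinset.card : ℝ) + 4 * (k:ℝ) - 2 := by
    have h0 : (0:ℝ) ≤ (G.edgeFinset.card : ℝ) := Nat.cast_nonneg _
    linarith
  unfold maxEigenvalue
  apply Real.sSup_le _ hb
  rintro μ ⟨x, hx0, hmul⟩
  set P := (Finset.univ : Finset (V × V)).filter (fun p => G.Adj p.1 p.2) with hPdef
  have hsym : TokenProof.Sym P := by
    intro p hp
    rw [hPdef, Finset.mem_filter] at hp ⊢
    exact ⟨Finset.mem_univ _, hp.2.symm⟩
  have hnd : TokenProof.NoDiag P := by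
    intro p hp
    rw [hPdef, Finset.mem_filter] at hp
    exact hp.2.ne
  have hmain := TokenProof.main_bound x hk1 P.card P rfl hsym hnd
  have htot := TokenProof.total_form x G
  rw [← hPdef] at htot
  have hPcard : (P.card : ℝ) = 2 * (G.edgeFinset.card : ℝ) := by
    have h2 := SimpleGraph.two_mul_card_edgeFinset (G := G)
    have hfe : (Finset.univ.filter fun (x, y) => G.Adj x y) = P := by
      rw [hPdef]
    rw [hfe] at h2
    exact_mod_cast h2.symm
  set S := ∑ σ : TokenProof.KSet V k, (x σ)^2 with hSdef
  have hSpos : 0 < S := by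
    obtain ⟨σ, hσ⟩ : ∃ σ, x σ ≠ 0 := by
      by_contra h
      push_neg at h
      exact hx0 (funext h)
    apply Finset.sum_pos' (fun i _ => sq_nonneg _)
    exact ⟨σ, Finset.mem_univ σ, by positivity⟩
  have hquad : μ * S =
      (∑ σ : TokenProof.KSet V k, ∑ τ : TokenProof.KSet V k,
        if (tokenGraph G k).Adj σ τ then (x σ - x τ)^2 else 0) / 2 := by
    have h1 := SimpleGraph.lapMatrix_toLinearMap₂' (R := ℝ) (G := tokenGraph G k) x
    have h2 : Matrix.toLinearMap₂' ℝ ((tokenGraph G k).lapMatrix ℝ) x x = μ * S := by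
      rw [Matrix.toLinearMap₂'_apply', hmul, dotProduct_smul, smul_eq_mul]
      congr 1
      rw [hSdef]
      apply Finset.sum_congr rfl
      intro σ _
      ring
    rw [← h2, h1]
  rw [htot] at hquad
  have hform_le : TokenProof.Form x P ≤ ((P.card : ℝ) + (8 * (k:ℝ) - 4)) * S := hmain
  rw [hPcard] at hform_le
  have hfinal : μ * S ≤ ((G.edgeFinset.card:ℝ) + 4 * (k:ℝ) - 2) * S := by
    rw [hquad]
    linarith
  exact le_of_mul_le_mul_right hfinal hSpos
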